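/- For any dimension d ≥ 1 and any ε ≤ 1/(2√d), the totally-separable packing number satisfies TS(d, ε) ≥ (2·⌊1/(2ε√d)⌋)^d. -/

import Mathlib

open scoped RealInnerProductSpace
open Metric MeasureTheory

/-- A `(d, ε)`-totally-separable packing (hyperplanes with bias allowed). -/
def IsTSPackingB (d : ℕ) (ε : ℝ) (P : Finset (EuclideanSpace ℝ (Fin d))) : Prop :=
  (∀ x ∈ P, ‖x‖ ≤ 1) ∧
  ∀ x ∈ P, ∀ y ∈ P, x ≠ y → ∃ (w : EuclideanSpace ℝ (Fin d)) (b : ℝ),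
    ‖w‖ = 1 ∧ ((0 ≤ ⟪w, x⟫ + b) ↔ ¬ (0 ≤ ⟪w, y⟫ + b)) ∧ ∀ z ∈ P, ε ≤ |⟪w, z⟫ + b|

/-- The `(d, ε)`-totally-separable packing number (with biases). -/
noncomputable def TSNumberB (d : ℕ) (ε : ℝ) : ℕ :=
  sSup {n | ∃ P, IsTSPackingB d ε P ∧ P.card = n}

/-- Grid point of the construction. -/
def gridPt (d M : ℕ) (ε : ℝ) (k : Fin d → Fin M) : EuclideanSpace ℝ (Fin d) :=
  WithLp.toLp 2 (fun i => (2 * ((k i : ℕ) : ℝ) + 1 - M) * ε)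

lemma gridPt_inj (d M : ℕ) (ε : ℝ) (hε : 0 < ε) :
    Function.Injective (gridPt d M ε) := by
  intro k k' h
  funext i
  have h1 : (2 * ((k i : ℕ) : ℝ) + 1 - M) * ε = (2 * ((k' i : ℕ) : ℝ) + 1 - M) * ε :=
    congrFun (congrArg WithLp.ofLp h) i
  have h2 : ((k i : ℕ) : ℝ) = ((k' i : ℕ) : ℝ) := by
    have := mul_right_cancel₀ hε.ne' h1
    linarith
  exact Fin.ext (by exact_mod_cast h2)

lemma grid_inner (d M : ℕ) (ε : ℝ) (j : Fin d) (k : Fin d → Fin M) :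
    ⟪EuclideanSpace.single j (1 : ℝ), gridPt d M ε k⟫ = (2 * ((k j : ℕ) : ℝ) + 1 - M) * ε := by
  rw [EuclideanSpace.inner_single_left]
  simp [gridPt]

lemma grid_sep (d M : ℕ) (ε : ℝ) (hε : 0 < ε) (k k' : Fin d → Fin M) (j : Fin d)
    (hj : (k j : ℕ) < (k' j : ℕ)) :
    ∃ (w : EuclideanSpace ℝ (Fin d)) (b : ℝ), ‖w‖ = 1 ∧
      ((0 ≤ ⟪w, gridPt d M ε k⟫ + b) ↔ ¬ (0 ≤ ⟪w, gridPt d M ε k'⟫ + b)) ∧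
      ∀ k'' : Fin d → Fin M, ε ≤ |⟪w, gridPt d M ε k''⟫ + b| := by
  refine ⟨EuclideanSpace.single j (1 : ℝ), -(2 * ((k j : ℕ) : ℝ) + 2 - M) * ε, ?_, ?_, ?_⟩
  · simp [EuclideanSpace.norm_single]
  · rw [grid_inner, grid_inner]
    have hx : (2 * ((k j : ℕ) : ℝ) + 1 - M) * ε + -(2 * ((k j : ℕ) : ℝ) + 2 - M) * ε = -ε := by
      ring
    have h1 : (1 : ℝ) ≤ ((k' j : ℕ) : ℝ) - ((k j : ℕ) : ℝ) := by
      have : ((k j : ℕ) : ℝ) + 1 ≤ ((k' j : ℕ) : ℝ) := by exact_mod_cast hj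
      linarith
    have hy : 0 ≤ (2 * ((k' j : ℕ) : ℝ) + 1 - M) * ε + -(2 * ((k j : ℕ) : ℝ) + 2 - M) * ε := by
      have heq : (2 * ((k' j : ℕ) : ℝ) + 1 - M) * ε + -(2 * ((k j : ℕ) : ℝ) + 2 - M) * ε
          = (2 * (((k' j : ℕ) : ℝ) - ((k j : ℕ) : ℝ)) - 1) * ε := by ring
      rw [heq]
      have : 0 ≤ 2 * (((k' j : ℕ) : ℝ) - ((k j : ℕ) : ℝ)) - 1 := by linarith
      positivity
    rw [hx]
    constructor
    · intro h; linarith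
    · intro h; exact absurd hy h
  · intro k''
    rw [grid_inner]
    have heq : (2 * ((k'' j : ℕ) : ℝ) + 1 - M) * ε + -(2 * ((k j : ℕ) : ℝ) + 2 - M) * ε
        = ((2 * (((k'' j : ℕ) : ℤ) - ((k j : ℕ) : ℤ)) - 1 : ℤ) : ℝ) * ε := by
      push_cast; ring
    rw [heq, abs_mul, abs_of_pos hε]
    have h1 : (1 : ℤ) ≤ |2 * (((k'' j : ℕ) : ℤ) - ((k j : ℕ) : ℤ)) - 1| :=
      Int.one_le_abs (by omega)
    have h2 : (1 : ℝ) ≤ |((2 * (((k'' j : ℕ) : ℤ) - ((k j : ℕ) : ℤ)) - 1 : ℤ) : ℝ)| := by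
      rw [← Int.cast_abs]; exact_mod_cast h1
    exact le_mul_of_one_le_left hε.le h2

/-- pairwise separation of a TS packing -/
lemma ts_sep {d : ℕ} {ε : ℝ} {P : Finset (EuclideanSpace ℝ (Fin d))}
    (hP : IsTSPackingB d ε P) {x y : EuclideanSpace ℝ (Fin d)}
    (hx : x ∈ P) (hy : y ∈ P) (hxy : x ≠ y) : 2 * ε ≤ dist x y := by
  obtain ⟨w, b, hw, hiff, hall⟩ := hP.2 x hx y hy hxy
  have hax := hall x hx
  have hay := hall y hy
  have key : ∀ u v : EuclideanSpace ℝ (Fin d), ε ≤ |⟪w, u⟫ + b| → ε ≤ |⟪w, v⟫ + b| →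
      (0 ≤ ⟪w, u⟫ + b) → ¬ (0 ≤ ⟪w, v⟫ + b) → 2 * ε ≤ dist u v := by
    intro u v hu hv h1 h2
    push_neg at h2
    have hu' : ε ≤ ⟪w, u⟫ + b := by
      rwa [abs_of_nonneg h1] at hu
    have hv' : ⟪w, v⟫ + b ≤ -ε := by
      rw [abs_of_neg h2] at hv; linarith
    have hsub : 2 * ε ≤ ⟪w, u - v⟫ := by
      rw [inner_sub_right]; linarith
    have hle : ⟪w, u - v⟫ ≤ ‖u - v‖ := by
      have := real_inner_le_norm w (u - v)
      rwa [hw, one_mul] at this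
    rw [dist_eq_norm]; linarith
  by_cases h1 : 0 ≤ ⟪w, x⟫ + b
  · exact key x y hax hay h1 (hiff.mp h1)
  · have h2 : 0 ≤ ⟪w, y⟫ + b := by
      by_contra h2
      exact h1 (hiff.mpr h2)
    rw [dist_comm]
    exact key y x hay hax h2 h1

lemma ts_card_le {d : ℕ} {ε : ℝ} (hε : 0 < ε) {P : Finset (EuclideanSpace ℝ (Fin d))}
    (hP : IsTSPackingB d ε P) :
    (P.card : ENNReal) * volume (ball (0 : EuclideanSpace ℝ (Fin d)) ε)
      ≤ volume (ball (0 : EuclideanSpace ℝ (Fin d)) (1 + ε)) := by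
  have hdisj : (↑P : Set (EuclideanSpace ℝ (Fin d))).PairwiseDisjoint (fun x => ball x ε) := by
    intro x hx y hy hxy
    exact ball_disjoint_ball (by linarith [ts_sep hP hx hy hxy])
  have hmeas := measure_biUnion_finset (μ := volume) hdisj (fun x _ => measurableSet_ball)
  have hsub : (⋃ x ∈ P, ball x ε) ⊆ ball (0 : EuclideanSpace ℝ (Fin d)) (1 + ε) := by
    intro z hz
    simp only [Set.mem_iUnion] at hz
    obtain ⟨x, hx, hzx⟩ := hz
    have hxn : ‖x‖ ≤ 1 := hP.1 x hx
    rw [mem_ball] at hzx ⊢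
    calc dist z 0 ≤ dist z x + dist x 0 := dist_triangle z x 0
      _ < ε + 1 := by
          rw [dist_zero_right]
          exact add_lt_add_of_lt_of_le hzx hxn
      _ = 1 + ε := by ring
  calc (P.card : ENNReal) * volume (ball (0 : EuclideanSpace ℝ (Fin d)) ε)
      = ∑ _x ∈ P, volume (ball (0 : EuclideanSpace ℝ (Fin d)) ε) := by
        rw [Finset.sum_const, nsmul_eq_mul]
    _ = ∑ x ∈ P, volume (ball x ε) := by
        exact Finset.sum_congr rfl fun x _ => (Measure.addHaar_ball_center volume x ε).symm
    _ = volume (⋃ x ∈ P, ball x ε) := hmeas.symm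
    _ ≤ _ := measure_mono hsub

lemma ts_bddAbove (d : ℕ) (ε : ℝ) (hε : 0 < ε) :
    BddAbove {n | ∃ P, IsTSPackingB d ε P ∧ P.card = n} := by
  set v := volume (ball (0 : EuclideanSpace ℝ (Fin d)) ε) with hv
  set V := volume (ball (0 : EuclideanSpace ℝ (Fin d)) (1 + ε)) with hV
  have hv0 : v ≠ 0 := (measure_ball_pos volume 0 hε).ne'
  have hvt : v ≠ ⊤ := measure_ball_lt_top.ne
  have hVt : V ≠ ⊤ := measure_ball_lt_top.ne
  refine ⟨⌈V.toReal / v.toReal⌉₊, fun n hn => ?_⟩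
  obtain ⟨P, hP, rfl⟩ := hn
  have h1 : (P.card : ENNReal) * v ≤ V := ts_card_le hε hP
  have h2 : ((P.card : ENNReal) * v).toReal ≤ V.toReal := ENNReal.toReal_mono hVt h1
  rw [ENNReal.toReal_mul, ENNReal.toReal_natCast] at h2
  have hv0' : 0 < v.toReal := ENNReal.toReal_pos hv0 hvt
  have h3 : (P.card : ℝ) ≤ V.toReal / v.toReal := (le_div_iff₀ hv0').mpr h2
  have h4 : (P.card : ℝ) ≤ (⌈V.toReal / v.toReal⌉₊ : ℝ) := h3.trans (Nat.le_ceil _)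
  exact_mod_cast h4

/-- Grid lower bound: `TS(d, ε) ≥ (2⌊1/(2ε√d)⌋)^d` for `ε ≤ 1/(2√d)`. -/
theorem TS_grid_lower_bound (d : ℕ) (hd : 1 ≤ d) (ε : ℝ) (hε : 0 < ε)
    (hεd : ε ≤ 1 / (2 * Real.sqrt d)) :
    (2 * ⌊1 / (2 * ε * Real.sqrt d)⌋₊) ^ d ≤ TSNumberB d ε := by
  set m := ⌊1 / (2 * ε * Real.sqrt d)⌋₊ with hm
  set M := 2 * m with hMdef
  have hdpos : (0 : ℝ) < d := by exact_mod_cast hd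
  have hsq : 0 < Real.sqrt d := Real.sqrt_pos.mpr hdpos
  have hden : (0 : ℝ) < 2 * ε * Real.sqrt d := by positivity
  have hmle : (m : ℝ) ≤ 1 / (2 * ε * Real.sqrt d) := Nat.floor_le (by positivity)
  have hMle : (M : ℝ) * ε * Real.sqrt d ≤ 1 := by
    have hMc : (M : ℝ) = 2 * m := by rw [hMdef]; push_cast; ring
    rw [hMc]
    have h2 : 0 < ε * Real.sqrt d := by positivity
    calc 2 * (m : ℝ) * ε * Real.sqrt d
        ≤ 2 * (1 / (2 * ε * Real.sqrt d)) * ε * Real.sqrt d := by nlinarith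
      _ = 1 := by field_simp
  have hM0 : 0 ≤ (M : ℝ) := by positivity
  -- the packing
  classical
  set P : Finset (EuclideanSpace ℝ (Fin d)) :=
    Finset.image (gridPt d M ε) Finset.univ with hPdef
  have hcard : P.card = M ^ d := by
    rw [hPdef, Finset.card_image_of_injective _ (gridPt_inj d M ε hε), Finset.card_univ]
    simp
  have hpack : IsTSPackingB d ε P := by
    constructor
    · intro x hx
      rw [hPdef, Finset.mem_image] at hx
      obtain ⟨k, _, rfl⟩ := hx
      rw [EuclideanSpace.norm_eq]
      rw [show (1 : ℝ) = Real.sqrt 1 by simp]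
      apply Real.sqrt_le_sqrt
      have hterm : ∀ i, ‖gridPt d M ε k i‖ ^ 2 ≤ ((M : ℝ) * ε) ^ 2 := by
        intro i
        have hki : ((k i : ℕ) : ℝ) < (M : ℝ) := by exact_mod_cast (k i).2
        have hki0 : (0 : ℝ) ≤ ((k i : ℕ) : ℝ) := by positivity
        have habs : |(2 * ((k i : ℕ) : ℝ) + 1 - M) * ε| ≤ (M : ℝ) * ε := by
          rw [abs_mul, abs_of_pos hε]
          have h1 : |2 * ((k i : ℕ) : ℝ) + 1 - M| ≤ (M : ℝ) := by
            rw [abs_le]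
            constructor
            · have : ((k i : ℕ) : ℝ) + 1 ≤ (M : ℝ) := by
                exact_mod_cast (k i).2
              linarith
            · have : ((k i : ℕ) : ℝ) + 1 ≤ (M : ℝ) := by
                exact_mod_cast (k i).2
              linarith
          exact mul_le_mul_of_nonneg_right h1 hε.le
        have hnorm : ‖gridPt d M ε k i‖ = |(2 * ((k i : ℕ) : ℝ) + 1 - M) * ε| := rfl
        rw [hnorm]
        have h0 : (0 : ℝ) ≤ |(2 * ((k i : ℕ) : ℝ) + 1 - M) * ε| := abs_nonneg _
        nlinarith
      calc ∑ i, ‖gridPt d M ε k i‖ ^ 2 ≤ ∑ _i : Fin d, ((M : ℝ) * ε) ^ 2 :=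
            Finset.sum_le_sum fun i _ => hterm i
        _ = d * ((M : ℝ) * ε) ^ 2 := by rw [Finset.sum_const]; simp [nsmul_eq_mul]
        _ ≤ 1 := by
            have hsq2 : Real.sqrt d ^ 2 = (d : ℝ) := Real.sq_sqrt hdpos.le
            have hx0 : 0 ≤ (M : ℝ) * ε * Real.sqrt d := by positivity
            have h5 : ((M : ℝ) * ε * Real.sqrt d) ^ 2 ≤ 1 := pow_le_one₀ hx0 hMle
            nlinarith
    · intro x hx y hy hxy
      rw [hPdef, Finset.mem_image] at hx hy
      obtain ⟨k, _, rfl⟩ := hx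
      obtain ⟨k', _, rfl⟩ := hy
      have hkk : k ≠ k' := fun h => hxy (by rw [h])
      obtain ⟨j, hj⟩ := Function.ne_iff.mp hkk
      have hval : (k j : ℕ) ≠ (k' j : ℕ) := fun h => hj (Fin.ext h)
      rcases lt_or_gt_of_ne hval with h | h
      · obtain ⟨w, b, hw, hiff, hall⟩ := grid_sep d M ε hε k k' j h
        refine ⟨w, b, hw, hiff, ?_⟩
        intro z hz
        rw [hPdef, Finset.mem_image] at hz
        obtain ⟨k'', _, rfl⟩ := hz
        exact hall k''
      · obtain ⟨w, b, hw, hiff, hall⟩ := grid_sep d M ε hε k' k j h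
        refine ⟨w, b, hw, by tauto, ?_⟩
        intro z hz
        rw [hPdef, Finset.mem_image] at hz
        obtain ⟨k'', _, rfl⟩ := hz
        exact hall k''
  have hmem : M ^ d ∈ {n | ∃ P, IsTSPackingB d ε P ∧ P.card = n} := ⟨P, hpack, hcard⟩
  exact le_csSup (ts_bddAbove d ε hε) hmem
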